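/- arXiv:2605.31587 — 2 statements merged into one kernel-verified Lean document; each statement's English description precedes it below -/
import Mathlib

section
/- Let n ≥ 1 and let C : ℝ → Matrix (Fin n) ℝ take symmetric values and be differentiable at t₀ with derivative Ċ(t₀). Set λ(t) := inf{ v·C(t)v : v ∈ ℝⁿ, ‖v‖ = 1 } (the smallest eigenvalue of C(t)), let E be the eigenspace of C(t₀) for the eigenvalue λ(t₀), and set τ := min{ e·Ċ(t₀)e : e ∈ E, ‖e‖ = 1 }. Then the one-sided limit lim_{h→0⁺} (λ(t₀+h) − λ(t₀))/h exists and equals τ; i.e., the right Dini derivative of λ at t₀ equals the minimum over unit vectors e in E of e·Ċ(t₀)e. -/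
open Matrix Filter

noncomputable def euclNorm {n : ℕ} (v : Fin n → ℝ) : ℝ := Real.sqrt (∑ i, v i ^ 2)

lemma euclNorm_sum {n : ℕ} {v : Fin n → ℝ} (h : euclNorm v = 1) : ∑ i, v i ^ 2 = 1 := by
  have h0 : 0 ≤ ∑ i, v i ^ 2 := Finset.sum_nonneg fun i _ => sq_nonneg _
  have := congrArg (fun x => x ^ 2) h
  simpa [euclNorm, Real.sq_sqrt h0] using this

lemma abs_le_one_of_norm {n : ℕ} {v : Fin n → ℝ} (h : euclNorm v = 1) (i : Fin n) : |v i| ≤ 1 := by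
  have h1 := euclNorm_sum h
  have : v i ^ 2 ≤ 1 := by
    calc v i ^ 2 ≤ ∑ j, v j ^ 2 :=
      Finset.single_le_sum (fun j _ => sq_nonneg (v j)) (Finset.mem_univ i)
    _ = 1 := h1
  exact abs_le_one_iff_mul_self_le_one.2 (by nlinarith)

lemma quad_abs_le {n : ℕ} (M : Matrix (Fin n) (Fin n) ℝ) {v : Fin n → ℝ} (h : euclNorm v = 1) :
    |v ⬝ᵥ M.mulVec v| ≤ ∑ i, ∑ j, |M i j| := by
  have hv := abs_le_one_of_norm h
  calc |v ⬝ᵥ M.mulVec v| = |∑ i, v i * ∑ j, M i j * v j| := by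
        simp [dotProduct, Matrix.mulVec]
    _ ≤ ∑ i, |v i * ∑ j, M i j * v j| := Finset.abs_sum_le_sum_abs _ _
    _ ≤ ∑ i, ∑ j, |M i j| := by
        refine Finset.sum_le_sum fun i _ => ?_
        rw [abs_mul]
        calc |v i| * |∑ j, M i j * v j| ≤ 1 * ∑ j, |M i j * v j| := by
              apply mul_le_mul (hv i) (Finset.abs_sum_le_sum_abs _ _) (abs_nonneg _) zero_le_one
          _ = ∑ j, |M i j| * |v j| := by simp [abs_mul]
          _ ≤ ∑ j, |M i j| * 1 := by
              refine Finset.sum_le_sum fun j _ => ?_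
              exact mul_le_mul_of_nonneg_left (hv j) (abs_nonneg _)
          _ = ∑ j, |M i j| := by simp

lemma continuous_quad {n : ℕ} (M : Matrix (Fin n) (Fin n) ℝ) :
    Continuous fun v : Fin n → ℝ => v ⬝ᵥ M.mulVec v := by
  simp only [dotProduct, Matrix.mulVec]
  fun_prop

lemma sphere_isCompact {n : ℕ} : IsCompact {v : Fin n → ℝ | euclNorm v = 1} := by
  apply Metric.isCompact_of_isClosed_isBounded
  · have : Continuous fun v : Fin n → ℝ => euclNorm v := by
      unfold euclNorm; fun_prop
    exact isClosed_eq this continuous_const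
  · rw [Metric.isBounded_iff_subset_closedBall 0]
    refine ⟨1, fun v hv => ?_⟩
    rw [Metric.mem_closedBall, dist_zero_right]
    rw [pi_norm_le_iff_of_nonneg zero_le_one]
    intro i
    simpa using abs_le_one_of_norm hv i

lemma sphere_nonempty {n : ℕ} (hn : 1 ≤ n) : ∃ v : Fin n → ℝ, euclNorm v = 1 := by
  refine ⟨Pi.single ⟨0, hn⟩ 1, ?_⟩
  unfold euclNorm
  rw [Finset.sum_eq_single ⟨0, hn⟩]
  · simp
  · intro j _ hj; simp [Pi.single_apply, hj]
  · simp


lemma reInner {n : ℕ} (M : Matrix (Fin n) (Fin n) ℝ) (x : EuclideanSpace ℝ (Fin n)) :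
    ContinuousLinearMap.reApplyInnerSelf (Matrix.toEuclideanCLM (𝕜 := ℝ) M) x =
      (WithLp.equiv 2 _ x) ⬝ᵥ M.mulVec (WithLp.equiv 2 _ x) := by
  have happ : ∀ i, (Matrix.toEuclideanCLM (𝕜 := ℝ) M) x i = M.mulVec (WithLp.equiv 2 _ x) i := by
    intro i
    exact congrFun (Matrix.ofLp_toEuclideanCLM (𝕜 := ℝ) M x) i
  simp only [ContinuousLinearMap.reApplyInnerSelf, PiLp.inner_apply, RCLike.inner_apply,
    RCLike.re_to_real, map_sum]
  simp [happ, dotProduct, Matrix.mulVec, mul_comm]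

lemma euclNorm_eq_norm {n : ℕ} (x : EuclideanSpace ℝ (Fin n)) :
    euclNorm (WithLp.equiv 2 _ x) = ‖x‖ := by
  rw [EuclideanSpace.norm_eq]
  simp [euclNorm, sq_abs]

lemma min_is_eigen {n : ℕ} (M : Matrix (Fin n) (Fin n) ℝ) (hM : M.IsSymm) (v₀ : Fin n → ℝ)
    (hv₀ : euclNorm v₀ = 1)
    (hmin : ∀ v : Fin n → ℝ, euclNorm v = 1 → v₀ ⬝ᵥ M.mulVec v₀ ≤ v ⬝ᵥ M.mulVec v) :
    M.mulVec v₀ = (v₀ ⬝ᵥ M.mulVec v₀) • v₀ := by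
  set x₀ : EuclideanSpace ℝ (Fin n) := (WithLp.equiv 2 (Fin n → ℝ)).symm v₀ with hx₀def
  have hveq : (WithLp.equiv 2 (Fin n → ℝ)) x₀ = v₀ := rfl
  have hx₀norm : ‖x₀‖ = 1 := by rw [← euclNorm_eq_norm, hveq, hv₀]
  set T := Matrix.toEuclideanCLM (𝕜 := ℝ) M with hT
  have hsa : _root_.IsSelfAdjoint T := by
    have hM' : star M = M := by
      rw [Matrix.star_eq_conjTranspose]
      ext i j
      simpa [Matrix.conjTranspose_apply] using (congrFun (congrFun hM.eq j) i).symm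
    show star T = T
    rw [hT, ← map_star]
    exact congrArg _ hM'
  have hextr : IsLocalExtrOn T.reApplyInnerSelf (Metric.sphere (0 : EuclideanSpace ℝ (Fin n)) ‖x₀‖) x₀ := by
    apply Or.inl
    apply IsMinOn.localize
    intro x hx
    rw [Set.mem_setOf_eq, reInner, reInner, hveq]
    apply hmin
    rw [euclNorm_eq_norm]
    rw [Metric.mem_sphere, dist_zero_right] at hx
    rw [hx, hx₀norm]
  have := hsa.eq_smul_self_of_isLocalExtrOn_real hextr
  have hray : T.rayleighQuotient x₀ = v₀ ⬝ᵥ M.mulVec v₀ := by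
    rw [ContinuousLinearMap.rayleighQuotient, hx₀norm, reInner, hveq]
    simp
  rw [hray] at this
  have happ : T x₀ = (WithLp.equiv 2 (Fin n → ℝ)).symm (M.mulVec v₀) := by
    rw [hT]
    exact Matrix.toEuclideanCLM_toLp M v₀
  rw [happ] at this
  calc M.mulVec v₀ = (WithLp.equiv 2 (Fin n → ℝ)) ((WithLp.equiv 2 (Fin n → ℝ)).symm (M.mulVec v₀)) := rfl
    _ = (WithLp.equiv 2 (Fin n → ℝ)) ((v₀ ⬝ᵥ M.mulVec v₀) • x₀) := by rw [this]
    _ = (v₀ ⬝ᵥ M.mulVec v₀) • v₀ := rfl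

lemma key_littleO {n : ℕ} (C : ℝ → Matrix (Fin n) (Fin n) ℝ) (t₀ : ℝ)
    (C' : Matrix (Fin n) (Fin n) ℝ)
    (hderiv : ∀ i j, HasDerivAt (fun t => C t i j) (C' i j) t₀) {ε : ℝ} (hε : 0 < ε) :
    ∀ᶠ h in nhdsWithin (0:ℝ) (Set.Ioi 0), ∀ v : Fin n → ℝ, euclNorm v = 1 →
      |v ⬝ᵥ (C (t₀+h)).mulVec v - v ⬝ᵥ (C t₀).mulVec v - h * (v ⬝ᵥ C'.mulVec v)| ≤ ε * h := by
  set ε' : ℝ := ε / ((n:ℝ)^2 + 1) with hε'def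
  have hε' : 0 < ε' := by positivity
  have htends : Tendsto (fun h : ℝ => t₀ + h) (nhdsWithin (0:ℝ) (Set.Ioi 0)) (nhds t₀) := by
    have : Tendsto (fun h : ℝ => t₀ + h) (nhds 0) (nhds t₀) := by
      simpa using (continuous_add_left t₀).tendsto (0:ℝ)
    exact this.mono_left nhdsWithin_le_nhds
  have hentry : ∀ i j, ∀ᶠ h in nhdsWithin (0:ℝ) (Set.Ioi 0),
      |C (t₀+h) i j - C t₀ i j - h * C' i j| ≤ ε' * h := by
    intro i j
    have h1 := hasDerivAt_iff_isLittleO.1 (hderiv i j)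
    have h2 := h1.def hε'
    filter_upwards [htends.eventually h2, self_mem_nhdsWithin] with h hh hpos
    rw [Set.mem_Ioi] at hpos
    simp only [add_sub_cancel_left, smul_eq_mul, Real.norm_eq_abs] at hh
    rwa [abs_of_pos hpos] at hh
  have hall : ∀ᶠ h in nhdsWithin (0:ℝ) (Set.Ioi 0), ∀ i j,
      |C (t₀+h) i j - C t₀ i j - h * C' i j| ≤ ε' * h :=
    eventually_all.2 fun i => eventually_all.2 (hentry i)
  filter_upwards [hall, self_mem_nhdsWithin] with h hh hpos v hv
  rw [Set.mem_Ioi] at hpos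
  set D : Matrix (Fin n) (Fin n) ℝ := C (t₀+h) - C t₀ - h • C' with hD
  have hrw : v ⬝ᵥ (C (t₀+h)).mulVec v - v ⬝ᵥ (C t₀).mulVec v - h * (v ⬝ᵥ C'.mulVec v)
      = v ⬝ᵥ D.mulVec v := by
    simp [hD, Matrix.sub_mulVec, Matrix.smul_mulVec, dotProduct_sub, dotProduct_smul,
      smul_eq_mul]
  rw [hrw]
  calc |v ⬝ᵥ D.mulVec v| ≤ ∑ i, ∑ j, |D i j| := quad_abs_le D hv
    _ ≤ ∑ i : Fin n, ∑ j : Fin n, ε' * h := by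
        refine Finset.sum_le_sum fun i _ => Finset.sum_le_sum fun j _ => ?_
        simpa [hD, Matrix.sub_apply, smul_eq_mul] using hh i j
    _ = (n:ℝ)^2 * (ε' * h) := by
        simp [Finset.sum_const]; ring
    _ ≤ ε * h := by
        have h1 : (0:ℝ) ≤ ε' * h := mul_nonneg hε'.le hpos.le
        have h2 : ((n:ℝ)^2 + 1) * (ε' * h) = ε * h := by
          rw [hε'def]; field_simp
        nlinarith

lemma continuous_mulVec {n : ℕ} (M : Matrix (Fin n) (Fin n) ℝ) :
    Continuous fun v : Fin n → ℝ => M.mulVec v := by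
  unfold Matrix.mulVec dotProduct
  fun_prop

lemma sphere_isClosed {n : ℕ} : IsClosed {v : Fin n → ℝ | euclNorm v = 1} := by
  have : Continuous fun v : Fin n → ℝ => euclNorm v := by
    unfold euclNorm; fun_prop
  exact isClosed_eq this continuous_const

lemma self_dot {n : ℕ} {v : Fin n → ℝ} (h : euclNorm v = 1) : v ⬝ᵥ v = 1 := by
  have := euclNorm_sum h
  simpa [dotProduct, sq] using this

theorem stmt2 (n : ℕ) (hn : 1 ≤ n) (C : ℝ → Matrix (Fin n) (Fin n) ℝ)
    (t₀ : ℝ) (C' : Matrix (Fin n) (Fin n) ℝ)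
    (hsymm : ∀ t, (C t).IsSymm)
    (hderiv : ∀ i j, HasDerivAt (fun t => C t i j) (C' i j) t₀)
    (lam : ℝ → ℝ)
    (hlam : ∀ t, lam t =
      sInf {x | ∃ v : Fin n → ℝ, euclNorm v = 1 ∧ x = v ⬝ᵥ (C t).mulVec v})
    (τ : ℝ)
    (hτ : τ = sInf {x | ∃ e : Fin n → ℝ, (C t₀).mulVec e = lam t₀ • e ∧
      euclNorm e = 1 ∧ x = e ⬝ᵥ C'.mulVec e}) :
    Tendsto (fun h : ℝ => (lam (t₀ + h) - lam t₀) / h) (nhdsWithin 0 (Set.Ioi 0)) (nhds τ) := by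
  classical
  set S : Set (Fin n → ℝ) := {v | euclNorm v = 1} with hSdef
  have hScpt : IsCompact S := sphere_isCompact
  have hSne : S.Nonempty := sphere_nonempty hn
  -- basic bounds on lam
  have hbdd : ∀ t, BddBelow {x | ∃ v : Fin n → ℝ, euclNorm v = 1 ∧ x = v ⬝ᵥ (C t).mulVec v} := by
    intro t
    refine ⟨-(∑ i, ∑ j, |C t i j|), ?_⟩
    rintro x ⟨v, hv, rfl⟩
    have h1 := quad_abs_le (C t) hv
    have h2 := neg_abs_le (v ⬝ᵥ (C t).mulVec v)
    linarith
  have hlam_le : ∀ t, ∀ v : Fin n → ℝ, euclNorm v = 1 → lam t ≤ v ⬝ᵥ (C t).mulVec v := by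
    intro t v hv; rw [hlam t]; exact csInf_le (hbdd t) ⟨v, hv, rfl⟩
  have hlam_ge : ∀ t, ∀ c : ℝ,
      (∀ v : Fin n → ℝ, euclNorm v = 1 → c ≤ v ⬝ᵥ (C t).mulVec v) → c ≤ lam t := by
    intro t c hc; rw [hlam t]
    apply le_csInf
    · obtain ⟨v, hv⟩ := hSne; exact ⟨_, v, hv, rfl⟩
    · rintro x ⟨v, hv, rfl⟩; exact hc v hv
  -- minimizer at t₀
  obtain ⟨v₀, hv₀S, hv₀min⟩ := hScpt.exists_isMinOn hSne (continuous_quad (C t₀)).continuousOn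
  have hv₀ : euclNorm v₀ = 1 := hv₀S
  have hlam₀ : lam t₀ = v₀ ⬝ᵥ (C t₀).mulVec v₀ :=
    le_antisymm (hlam_le t₀ v₀ hv₀) (hlam_ge t₀ _ fun v hv => hv₀min hv)
  have heig₀ : (C t₀).mulVec v₀ = lam t₀ • v₀ := by
    rw [hlam₀]
    exact min_is_eigen (C t₀) (hsymm t₀) v₀ hv₀ fun v hv => hv₀min hv
  -- the eigensphere
  set ES : Set (Fin n → ℝ) := {e | (C t₀).mulVec e = lam t₀ • e ∧ euclNorm e = 1} with hESdef
  have hESne : ES.Nonempty := ⟨v₀, heig₀, hv₀⟩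
  have hEScpt : IsCompact ES := by
    apply hScpt.of_isClosed_subset
    · have h1 : IsClosed {e : Fin n → ℝ | (C t₀).mulVec e = lam t₀ • e} :=
        isClosed_eq (continuous_mulVec (C t₀)) (continuous_const_smul (lam t₀))
      exact h1.inter sphere_isClosed
    · intro e he; exact he.2
  obtain ⟨e₀, he₀ES, he₀min⟩ := hEScpt.exists_isMinOn hESne (continuous_quad C').continuousOn
  have hleast : IsLeast {x | ∃ e : Fin n → ℝ, (C t₀).mulVec e = lam t₀ • e ∧
      euclNorm e = 1 ∧ x = e ⬝ᵥ C'.mulVec e} (e₀ ⬝ᵥ C'.mulVec e₀) := by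
    constructor
    · exact ⟨e₀, he₀ES.1, he₀ES.2, rfl⟩
    · rintro x ⟨e, h1, h2, rfl⟩; exact he₀min ⟨h1, h2⟩
  have hτval : τ = e₀ ⬝ᵥ C'.mulVec e₀ := by rw [hτ]; exact hleast.csInf_eq
  have hτ_lb : ∀ e : Fin n → ℝ, (C t₀).mulVec e = lam t₀ • e → euclNorm e = 1 →
      τ ≤ e ⬝ᵥ C'.mulVec e := by
    intro e h1 h2; rw [hτval]; exact he₀min ⟨h1, h2⟩
  -- bound on the derivative quadratic form
  set K₀ : ℝ := ∑ i, ∑ j, |C' i j| with hK₀def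
  have hg_bd : ∀ v : Fin n → ℝ, euclNorm v = 1 → |v ⬝ᵥ C'.mulVec v| ≤ K₀ :=
    fun v hv => quad_abs_le C' hv
  have hK₀ : 0 ≤ K₀ := le_trans (abs_nonneg _) (hg_bd v₀ hv₀)
  -- main estimate
  rw [Metric.tendsto_nhds]
  intro ε hε
  set ε₁ : ℝ := ε / 4 with hε₁def
  have hε₁ : 0 < ε₁ := by positivity
  -- the δ separating non-near-minimizing directions
  obtain ⟨δ, hδpos, hδ⟩ : ∃ δ > 0, ∀ v : Fin n → ℝ, euclNorm v = 1 →
      v ⬝ᵥ C'.mulVec v ≤ τ - ε₁ → lam t₀ + δ ≤ v ⬝ᵥ (C t₀).mulVec v := by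
    set Kset : Set (Fin n → ℝ) := {v | euclNorm v = 1 ∧ v ⬝ᵥ C'.mulVec v ≤ τ - ε₁} with hKdef
    rcases Set.eq_empty_or_nonempty Kset with hK | hK
    · refine ⟨1, one_pos, fun v hv1 hv2 => absurd ?_ (Set.notMem_empty v)⟩
      rw [← hK]; exact ⟨hv1, hv2⟩
    · have hKcpt : IsCompact Kset := by
        apply hScpt.of_isClosed_subset
        · exact sphere_isClosed.inter
            (isClosed_le (continuous_quad C') continuous_const)
        · intro v hv; exact hv.1
      obtain ⟨w₀, hw₀K, hw₀min⟩ :=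
        hKcpt.exists_isMinOn hK (continuous_quad (C t₀)).continuousOn
      have h1 : lam t₀ ≤ w₀ ⬝ᵥ (C t₀).mulVec w₀ := hlam_le t₀ w₀ hw₀K.1
      have h2 : lam t₀ ≠ w₀ ⬝ᵥ (C t₀).mulVec w₀ := by
        intro heq
        have hminS : ∀ v : Fin n → ℝ, euclNorm v = 1 →
            w₀ ⬝ᵥ (C t₀).mulVec w₀ ≤ v ⬝ᵥ (C t₀).mulVec v :=
          fun v hv => heq ▸ hlam_le t₀ v hv
        have heigw : (C t₀).mulVec w₀ = lam t₀ • w₀ := by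
          rw [heq]
          exact min_is_eigen (C t₀) (hsymm t₀) w₀ hw₀K.1 hminS
        have := hτ_lb w₀ heigw hw₀K.1
        have := hw₀K.2
        linarith
      refine ⟨w₀ ⬝ᵥ (C t₀).mulVec w₀ - lam t₀, by cases lt_or_eq_of_le h1 with
        | inl h => linarith
        | inr h => exact absurd h h2, ?_⟩
      intro v hv1 hv2
      have h6 := hw₀min (show v ∈ Kset from ⟨hv1, hv2⟩)
      simp only [Set.mem_setOf_eq] at h6
      linarith
  have hden : (0:ℝ) < K₀ + |τ| + ε₁ + 1 := by positivity
  have hsmall : ∀ᶠ h in nhdsWithin (0:ℝ) (Set.Ioi 0), h < δ / (K₀ + |τ| + ε₁ + 1) := by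
    have hmem : Set.Ioo (0:ℝ) (δ / (K₀ + |τ| + ε₁ + 1)) ∈ nhdsWithin (0:ℝ) (Set.Ioi 0) :=
      Ioo_mem_nhdsGT_of_mem ⟨le_refl 0, by positivity⟩
    filter_upwards [hmem] with h hh
    exact hh.2
  filter_upwards [key_littleO C t₀ C' hderiv hε₁, hsmall, self_mem_nhdsWithin]
    with h hkey hh hpos
  rw [Set.mem_Ioi] at hpos
  -- upper bound
  have hq₀e₀ : e₀ ⬝ᵥ (C t₀).mulVec e₀ = lam t₀ := by
    rw [he₀ES.1, dotProduct_smul, smul_eq_mul, self_dot he₀ES.2, mul_one]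
  have hub : lam (t₀ + h) ≤ lam t₀ + h * (τ + ε₁) := by
    have h1 := (abs_le.1 (hkey e₀ he₀ES.2)).2
    have h3 := hlam_le (t₀ + h) e₀ he₀ES.2
    rw [hq₀e₀, ← hτval] at h1
    nlinarith
  -- lower bound
  have hlb : lam t₀ + h * (τ - 2 * ε₁) ≤ lam (t₀ + h) := by
    apply hlam_ge
    intro v hv
    have h1 := (abs_le.1 (hkey v hv)).1
    by_cases hcase : v ⬝ᵥ C'.mulVec v ≤ τ - ε₁
    · have h2 := hδ v hv hcase
      have h3 := (abs_le.1 (hg_bd v hv)).1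
      have h4 : h * (K₀ + |τ| + ε₁ + 1) ≤ δ := le_of_lt ((lt_div_iff₀ hden).1 hh)
      have h5 : τ ≤ |τ| := le_abs_self τ
      nlinarith [mul_le_mul_of_nonneg_left h3 hpos.le]
    · push_neg at hcase
      have h2 := hlam_le t₀ v hv
      nlinarith [mul_lt_mul_of_pos_left hcase hpos]
  -- conclude
  rw [Real.dist_eq, abs_lt]
  have hne : h ≠ 0 := ne_of_gt hpos
  constructor
  · have h5 : (τ - 2 * ε₁) * h ≤ lam (t₀ + h) - lam t₀ := by nlinarith
    have h6 : τ - 2 * ε₁ ≤ (lam (t₀ + h) - lam t₀) / h := (le_div_iff₀ hpos).2 h5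
    linarith
  · have h5 : lam (t₀ + h) - lam t₀ ≤ (τ + ε₁) * h := by nlinarith
    have h6 : (lam (t₀ + h) - lam t₀) / h ≤ τ + ε₁ := (div_le_iff₀ hpos).2 h5
    linarith
end

section
/- Let n ≥ 1 and let F : ℝ → Matrix (Fin n) ℝ be differentiable at t₀ with F(t₀) invertible and Ḟ(t₀) = L · F(t₀) for some matrix L (the velocity gradient along the trajectory). Set S := (L + Lᵀ)/2, C(t) := F(t)F(t)ᵀ, ν(t) := √( inf{ v·C(t)v : ‖v‖ = 1 } ) (the smallest singular value of F(t)), and let E be the eigenspace of C(t₀) for the eigenvalue ν(t₀)². Then the right derivative of ν at t₀ exists and satisfies lim_{h→0⁺} (ν(t₀+h) − ν(t₀))/h = ν(t₀) · min{ e·Se : e ∈ E, ‖e‖ = 1 }. -/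
open Matrix Filter

lemma euclNorm_eq_one_iff {n : ℕ} (v : Fin n → ℝ) :
    euclNorm v = 1 ↔ ∑ i, v i ^ 2 = 1 := by
  unfold euclNorm
  have h0 : (0:ℝ) ≤ ∑ i, v i ^ 2 := Finset.sum_nonneg fun i _ => sq_nonneg _
  rw [show (1:ℝ) = Real.sqrt 1 by simp, Real.sqrt_inj h0 (by norm_num), Real.sqrt_one]

lemma unit_abs_le {n : ℕ} {v : Fin n → ℝ} (hv : ∑ i, v i ^ 2 = 1) (i : Fin n) :
    |v i| ≤ 1 := by
  have : v i ^ 2 ≤ 1 := by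
    rw [← hv]
    exact Finset.single_le_sum (f := fun i => v i ^ 2) (fun j _ => sq_nonneg _) (Finset.mem_univ i)
  nlinarith [abs_nonneg (v i), sq_abs (v i)]

lemma dot_bound {n : ℕ} (M : Matrix (Fin n) (Fin n) ℝ) (v w : Fin n → ℝ) (a b : ℝ)
    (ha : 0 ≤ a)
    (hv : ∀ i, |v i| ≤ a) (hw : ∀ j, |w j| ≤ b) :
    |v ⬝ᵥ M *ᵥ w| ≤ (∑ i, ∑ j, |M i j|) * (a * b) := by
  have hexp : v ⬝ᵥ M *ᵥ w = ∑ i, ∑ j, v i * (M i j * w j) := by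
    simp [dotProduct, mulVec, Finset.mul_sum]
  rw [hexp, Finset.sum_mul]
  refine (Finset.abs_sum_le_sum_abs _ _).trans (Finset.sum_le_sum fun i _ => ?_)
  rw [Finset.sum_mul]
  refine (Finset.abs_sum_le_sum_abs _ _).trans (Finset.sum_le_sum fun j _ => ?_)
  rw [abs_mul, abs_mul]
  calc |v i| * (|M i j| * |w j|) ≤ a * (|M i j| * b) := by
        apply mul_le_mul (hv i) (mul_le_mul_of_nonneg_left (hw j) (abs_nonneg _))
          (by positivity) ha
    _ = |M i j| * (a * b) := by ring

lemma sum_sq_continuous {n : ℕ} : Continuous (fun v : Fin n → ℝ => ∑ i, v i ^ 2) := by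
  fun_prop

lemma sphere_compact {n : ℕ} : IsCompact {v : Fin n → ℝ | ∑ i, v i ^ 2 = 1} := by
  have hclosed : IsClosed {v : Fin n → ℝ | ∑ i, v i ^ 2 = 1} :=
    isClosed_eq sum_sq_continuous continuous_const
  have hsub : {v : Fin n → ℝ | ∑ i, v i ^ 2 = 1} ⊆ Metric.closedBall 0 1 := by
    intro v hv
    rw [Metric.mem_closedBall, dist_zero_right]
    rw [pi_norm_le_iff_of_nonneg (by norm_num)]
    intro i
    simpa [Real.norm_eq_abs] using unit_abs_le hv i
  exact (isCompact_closedBall 0 1).of_isClosed_subset hclosed hsub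

lemma quad_continuous {n : ℕ} (M : Matrix (Fin n) (Fin n) ℝ) :
    Continuous (fun v : Fin n → ℝ => v ⬝ᵥ M *ᵥ v) := by
  have : (fun v : Fin n → ℝ => v ⬝ᵥ M *ᵥ v)
      = fun v => ∑ i, ∑ j, v i * (M i j * v j) := by
    funext v; simp [dotProduct, mulVec, Finset.mul_sum]
  rw [this]; fun_prop

lemma sInf_image_attained {α : Type*} [TopologicalSpace α] {K : Set α} (hK : IsCompact K)
    (hne : K.Nonempty) {φ : α → ℝ} (hφ : Continuous φ) :
    (∃ v ∈ K, φ v = sInf {x | ∃ u ∈ K, x = φ u}) ∧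
      ∀ w ∈ K, sInf {x | ∃ u ∈ K, x = φ u} ≤ φ w := by
  have himg : {x | ∃ u ∈ K, x = φ u} = φ '' K := by
    ext x; simp [Set.mem_image, eq_comm]
  have hcomp : IsCompact (φ '' K) := hK.image hφ
  have hbdd : BddBelow (φ '' K) := hcomp.bddBelow
  have hnem : (φ '' K).Nonempty := hne.image φ
  constructor
  · have := hcomp.sInf_mem hnem
    rw [himg]
    obtain ⟨v, hvK, hv⟩ := this
    exact ⟨v, hvK, hv⟩
  · intro w hw
    rw [himg]
    exact csInf_le hbdd ⟨w, hw, rfl⟩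

lemma psd_cs {n : ℕ} (A : Matrix (Fin n) (Fin n) ℝ) (hsym : Aᵀ = A)
    (hpsd : ∀ x, 0 ≤ x ⬝ᵥ A *ᵥ x) {v : Fin n → ℝ} (hv : v ⬝ᵥ A *ᵥ v = 0) :
    A *ᵥ v = 0 := by
  have key : ∀ x : Fin n → ℝ, x ⬝ᵥ A *ᵥ v = 0 := by
    intro x
    by_contra hb
    set b := x ⬝ᵥ A *ᵥ v with hbdef
    set a := x ⬝ᵥ A *ᵥ x with hadef
    have ha : 0 ≤ a := hpsd x
    have hsymdot : v ⬝ᵥ A *ᵥ x = b := by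
      have h1 : v ⬝ᵥ A *ᵥ x = (A *ᵥ v) ⬝ᵥ x := by
        rw [Matrix.dotProduct_mulVec, ← Matrix.vecMul_transpose, hsym]
      rw [h1, dotProduct_comm]
    have hquad : ∀ t : ℝ, 0 ≤ t ^ 2 * a + 2 * t * b := by
      intro t
      have := hpsd (v + t • x)
      have hexp : (v + t • x) ⬝ᵥ A *ᵥ (v + t • x)
          = v ⬝ᵥ A *ᵥ v + t * (x ⬝ᵥ A *ᵥ v) + t * (v ⬝ᵥ A *ᵥ x) + t^2 * a := by
        simp [Matrix.mulVec_add, Matrix.mulVec_smul, dotProduct_add, add_dotProduct,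
          smul_dotProduct, dotProduct_smul, hadef, smul_eq_mul]
        ring
      rw [hexp, hv, hsymdot] at this
      linarith
    set t := -b / (a + b ^ 2) with htdef
    have hb2 : 0 < b ^ 2 := by positivity
    have hab : 0 < a + b ^ 2 := by positivity
    have hq := hquad t
    have ht2 : t ^ 2 * a + 2 * t * b = -(b ^ 2 * (a + 2 * b ^ 2)) / (a + b ^ 2) ^ 2 := by
      rw [htdef]; field_simp; ring
    rw [ht2] at hq
    have hnum : 0 < b ^ 2 * (a + 2 * b ^ 2) := by positivity
    have hpos : 0 < b ^ 2 * (a + 2 * b ^ 2) / (a + b ^ 2) ^ 2 :=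
      div_pos hnum (pow_pos hab 2)
    rw [neg_div] at hq
    linarith
  funext i
  have := key (Pi.single i 1)
  rwa [single_dotProduct, one_mul] at this

lemma mulVec_continuous {n : ℕ} (M : Matrix (Fin n) (Fin n) ℝ) :
    Continuous (fun v : Fin n → ℝ => M *ᵥ v) :=
  LinearMap.continuous_of_finiteDimensional (Matrix.mulVecLin M)

lemma quad_eq {n : ℕ} (F : Matrix (Fin n) (Fin n) ℝ) (v : Fin n → ℝ) :
    v ⬝ᵥ (F * Fᵀ) *ᵥ v = (Fᵀ *ᵥ v) ⬝ᵥ (Fᵀ *ᵥ v) := by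
  rw [← Matrix.mulVec_mulVec, Matrix.dotProduct_mulVec, ← Matrix.mulVec_transpose]

lemma quad_smul {n : ℕ} (M : Matrix (Fin n) (Fin n) ℝ) (c : ℝ) (v : Fin n → ℝ) :
    (c • v) ⬝ᵥ M *ᵥ (c • v) = c ^ 2 * (v ⬝ᵥ M *ᵥ v) := by
  rw [Matrix.mulVec_smul, dotProduct_smul, smul_dotProduct]
  simp [smul_eq_mul]; ring

set_option maxHeartbeats 1600000 in
theorem stmt6 (n : ℕ) (hn : 1 ≤ n) (F : ℝ → Matrix (Fin n) (Fin n) ℝ) (t₀ : ℝ)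
    (L : Matrix (Fin n) (Fin n) ℝ)
    (hinv : IsUnit (F t₀))
    (hderiv : ∀ i j, HasDerivAt (fun t => F t i j) ((L * F t₀) i j) t₀)
    (S : Matrix (Fin n) (Fin n) ℝ) (hS : S = (1 / 2 : ℝ) • (L + Lᵀ))
    (ν : ℝ → ℝ)
    (hν : ∀ t, ν t = Real.sqrt
      (sInf {x | ∃ v : Fin n → ℝ, euclNorm v = 1 ∧ x = v ⬝ᵥ (F t * (F t)ᵀ).mulVec v}))
    (τ : ℝ)
    (hτ : τ = sInf {x | ∃ e : Fin n → ℝ, (F t₀ * (F t₀)ᵀ).mulVec e = (ν t₀ ^ 2) • e ∧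
      euclNorm e = 1 ∧ x = e ⬝ᵥ S.mulVec e}) :
    Tendsto (fun h : ℝ => (ν (t₀ + h) - ν t₀) / h) (nhdsWithin 0 (Set.Ioi 0))
      (nhds (ν t₀ * τ)) := by
  classical
  set C : ℝ → Matrix (Fin n) (Fin n) ℝ := fun t => F t * (F t)ᵀ with hC
  set q : ℝ → (Fin n → ℝ) → ℝ := fun t v => v ⬝ᵥ (C t) *ᵥ v with hq
  set Sph : Set (Fin n → ℝ) := {v | ∑ i, v i ^ 2 = 1} with hSph
  set f : ℝ → ℝ := fun t =>
    sInf {x | ∃ v : Fin n → ℝ, euclNorm v = 1 ∧ x = v ⬝ᵥ (C t) *ᵥ v} with hf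
  have hνf : ∀ t, ν t = Real.sqrt (f t) := hν
  -- rewrite the set in image form
  have hsetf : ∀ t, {x | ∃ v : Fin n → ℝ, euclNorm v = 1 ∧ x = v ⬝ᵥ (C t) *ᵥ v}
      = {x | ∃ u ∈ Sph, x = q t u} := by
    intro t; ext x
    simp only [Set.mem_setOf_eq, hSph, hq]
    constructor
    · rintro ⟨v, hv, rfl⟩; exact ⟨v, (euclNorm_eq_one_iff v).1 hv, rfl⟩
    · rintro ⟨v, hv, rfl⟩; exact ⟨v, (euclNorm_eq_one_iff v).2 hv, rfl⟩
  have hSphne : Sph.Nonempty := by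
    refine ⟨Pi.single ⟨0, hn⟩ 1, ?_⟩
    simp only [hSph, Set.mem_setOf_eq]
    rw [Finset.sum_eq_single (⟨0, hn⟩ : Fin n)]
    · simp
    · intro j _ hj; simp [Pi.single_apply, hj]
    · simp
  -- attainment of f t
  have hmin : ∀ t, (∃ v ∈ Sph, q t v = f t) ∧ ∀ w ∈ Sph, f t ≤ q t w := by
    intro t
    have := sInf_image_attained sphere_compact hSphne (quad_continuous (C t))
    rw [hf]
    simp only [hsetf t]
    exact ⟨this.1, this.2⟩
  set m : ℝ := f t₀ with hm
  obtain ⟨⟨vs, hvsS, hvsq⟩, hmlb⟩ := hmin t₀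
  -- nonnegativity of q and f
  have hqnonneg : ∀ t v, 0 ≤ q t v := by
    intro t v
    rw [hq]
    simp only [hC]
    rw [quad_eq]
    exact Finset.sum_nonneg fun i _ => mul_self_nonneg _
  have hfnonneg : ∀ t, 0 ≤ f t := by
    intro t
    obtain ⟨⟨v, hvS, hvq⟩, _⟩ := hmin t
    rw [← hvq]; exact hqnonneg t v
  -- m > 0
  have hmpos : 0 < m := by
    rcases lt_or_eq_of_le (hfnonneg t₀) with h | h
    · exact h
    exfalso
    have hq0 : q t₀ vs = 0 := by rw [hvsq, ← h]
    have hw : (F t₀)ᵀ *ᵥ vs = 0 := by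
      have : ((F t₀)ᵀ *ᵥ vs) ⬝ᵥ ((F t₀)ᵀ *ᵥ vs) = 0 := by
        rw [← quad_eq]; exact hq0
      exact dotProduct_self_eq_zero.1 this
    have hdet : IsUnit (F t₀).det := (Matrix.isUnit_iff_isUnit_det _).1 hinv
    have hBF : F t₀ * (F t₀)⁻¹ = 1 := Matrix.mul_nonsing_inv _ hdet
    have hvs0 : vs = 0 := by
      have h1 : ((F t₀)⁻¹)ᵀ *ᵥ ((F t₀)ᵀ *ᵥ vs) = vs := by
        rw [Matrix.mulVec_mulVec, ← Matrix.transpose_mul, hBF, Matrix.transpose_one,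
          Matrix.one_mulVec]
      rw [← h1, hw, Matrix.mulVec_zero]
    have := hvsS
    rw [hvs0] at this
    simp only [hSph, Set.mem_setOf_eq, Pi.zero_apply] at this
    norm_num at this
  -- scaling bound : q t₀ x ≥ m * ∑ x i ^2
  have hscale : ∀ x : Fin n → ℝ, m * ∑ i, x i ^ 2 ≤ q t₀ x := by
    intro x
    set s : ℝ := ∑ i, x i ^ 2 with hs
    have hs0 : 0 ≤ s := Finset.sum_nonneg fun i _ => sq_nonneg _
    rcases eq_or_lt_of_le hs0 with hz | hp
    · have hx0 : x = 0 := by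
        funext i
        have := (Finset.sum_eq_zero_iff_of_nonneg (fun j _ => sq_nonneg (x j))).1 hz.symm i
          (Finset.mem_univ i)
        exact pow_eq_zero_iff two_ne_zero |>.1 this
      rw [hx0, ← hz]
      simp [hq]
    · set c : ℝ := Real.sqrt s with hc
      have hcpos : 0 < c := Real.sqrt_pos.2 hp
      have hc2 : c ^ 2 = s := Real.sq_sqrt hs0
      have huS : (c⁻¹ • x) ∈ Sph := by
        simp only [hSph, Set.mem_setOf_eq, Pi.smul_apply, smul_eq_mul, mul_pow,
          ← Finset.mul_sum]
        rw [← hs, inv_pow, hc2, inv_mul_cancel₀ (ne_of_gt hp)]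
      have := hmlb _ huS
      rw [hq] at this ⊢
      simp only at this ⊢
      rw [quad_smul] at this
      have h2 : m * s ≤ (c⁻¹ ^ 2 * (x ⬝ᵥ C t₀ *ᵥ x)) * s := by
        exact mul_le_mul_of_nonneg_right this hs0
      calc m * s ≤ (c⁻¹ ^ 2 * (x ⬝ᵥ C t₀ *ᵥ x)) * s := h2
        _ = (c ^ 2)⁻¹ * s * (x ⬝ᵥ C t₀ *ᵥ x) := by rw [inv_pow]; ring
        _ = x ⬝ᵥ C t₀ *ᵥ x := by rw [hc2, inv_mul_cancel₀ (ne_of_gt hp), one_mul]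
  -- unit vectors with minimal Rayleigh quotient are eigenvectors
  have hCsym : (C t₀)ᵀ = C t₀ := by
    simp only [hC]
    rw [Matrix.transpose_mul, Matrix.transpose_transpose]
  have heig : ∀ v ∈ Sph, q t₀ v = m → C t₀ *ᵥ v = m • v := by
    intro v hvS hvq
    set A : Matrix (Fin n) (Fin n) ℝ := C t₀ - m • (1 : Matrix (Fin n) (Fin n) ℝ) with hA
    have hAv : ∀ x : Fin n → ℝ, x ⬝ᵥ A *ᵥ x = q t₀ x - m * ∑ i, x i ^ 2 := by
      intro x
      rw [hA, Matrix.sub_mulVec, dotProduct_sub, Matrix.smul_mulVec,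
        Matrix.one_mulVec, dotProduct_smul, smul_eq_mul]
      congr 2
      simp [dotProduct, sq]
    have hsymA : Aᵀ = A := by
      rw [hA, Matrix.transpose_sub, Matrix.transpose_smul, Matrix.transpose_one, hCsym]
    have hpsd : ∀ x, 0 ≤ x ⬝ᵥ A *ᵥ x := by
      intro x; rw [hAv]; linarith [hscale x]
    have hv0 : v ⬝ᵥ A *ᵥ v = 0 := by
      rw [hAv, hvq]
      have : ∑ i, v i ^ 2 = 1 := hvS
      rw [this, mul_one, sub_self]
    have := psd_cs A hsymA hpsd hv0
    rw [hA, Matrix.sub_mulVec, Matrix.smul_mulVec, Matrix.one_mulVec, sub_eq_zero] at this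
    exact this
  -- eigenspace sphere
  set ES : Set (Fin n → ℝ) := {e | C t₀ *ᵥ e = m • e ∧ e ∈ Sph} with hES
  have hvsES : vs ∈ ES := ⟨heig vs hvsS hvsq, hvsS⟩
  have hESc : IsCompact ES := by
    have hcl : IsClosed {e : Fin n → ℝ | C t₀ *ᵥ e = m • e} :=
      isClosed_eq (mulVec_continuous _) (continuous_const_smul m)
    have : ES = Sph ∩ {e | C t₀ *ᵥ e = m • e} := by
      ext e; simp only [hES, Set.mem_setOf_eq, Set.mem_inter_iff]; tauto
    rw [this]
    exact sphere_compact.inter_right hcl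
  -- τ is attained
  have hmnt : ν t₀ ^ 2 = m := by
    rw [hνf t₀]
    exact Real.sq_sqrt (hfnonneg t₀)
  have hτset : {x | ∃ e : Fin n → ℝ, (F t₀ * (F t₀)ᵀ).mulVec e = (ν t₀ ^ 2) • e ∧
      euclNorm e = 1 ∧ x = e ⬝ᵥ S.mulVec e} = {x | ∃ u ∈ ES, x = u ⬝ᵥ S *ᵥ u} := by
    ext x
    simp only [Set.mem_setOf_eq, hES, hSph, hmnt]
    constructor
    · rintro ⟨e, he1, he2, rfl⟩
      exact ⟨e, ⟨he1, (euclNorm_eq_one_iff e).1 he2⟩, rfl⟩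
    · rintro ⟨e, ⟨he1, he2⟩, rfl⟩
      exact ⟨e, he1, (euclNorm_eq_one_iff e).2 he2, rfl⟩
  have hτmin : (∃ e ∈ ES, e ⬝ᵥ S *ᵥ e = τ) ∧ ∀ e ∈ ES, τ ≤ e ⬝ᵥ S *ᵥ e := by
    have := sInf_image_attained hESc ⟨vs, hvsES⟩ (quad_continuous S)
    rw [hτ, hτset]
    exact this
  obtain ⟨⟨es, hesES, hesτ⟩, hτlb⟩ := hτmin
  -- derivative matrix
  set D : Matrix (Fin n) (Fin n) ℝ := L * C t₀ + C t₀ * Lᵀ with hD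
  have hCd : ∀ i j, HasDerivAt (fun t => C t i j) (D i j) t₀ := by
    intro i j
    have hsum : HasDerivAt (fun t => ∑ k, F t i k * F t j k)
        (∑ k, ((L * F t₀) i k * F t₀ j k + F t₀ i k * (L * F t₀) j k)) t₀ :=
      HasDerivAt.fun_sum fun k _ => (hderiv i k).mul (hderiv j k)
    have heq : (fun t => C t i j) = fun t => ∑ k, F t i k * F t j k := by
      funext t; simp [hC, Matrix.mul_apply]
    have hDij : D i j = ∑ k, ((L * F t₀) i k * F t₀ j k + F t₀ i k * (L * F t₀) j k) := by
      rw [hD, Matrix.add_apply, Finset.sum_add_distrib]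
      congr 1
      · have e1 : L * C t₀ = (L * F t₀) * (F t₀)ᵀ := by rw [hC, Matrix.mul_assoc]
        rw [e1, Matrix.mul_apply]
        simp [Matrix.transpose_apply]
      · have e2 : C t₀ * Lᵀ = F t₀ * (L * F t₀)ᵀ := by
          rw [hC, Matrix.transpose_mul, Matrix.mul_assoc]
        rw [e2, Matrix.mul_apply]
        simp [Matrix.transpose_apply]
    rw [heq, hDij]
    exact hsum
  -- D-quadratic form on eigenvectors
  have hDq : ∀ e ∈ ES, e ⬝ᵥ D *ᵥ e = 2 * m * (e ⬝ᵥ S *ᵥ e) := by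
    rintro e ⟨he1, _⟩
    have hLT : e ⬝ᵥ Lᵀ *ᵥ e = e ⬝ᵥ L *ᵥ e := by
      rw [Matrix.dotProduct_mulVec, Matrix.vecMul_transpose, dotProduct_comm]
    have hCe : ∀ w, e ⬝ᵥ C t₀ *ᵥ w = m * (e ⬝ᵥ w) := by
      intro w
      rw [Matrix.dotProduct_mulVec, ← Matrix.mulVec_transpose, hCsym, he1,
        smul_dotProduct, smul_eq_mul]
    have hterm1 : e ⬝ᵥ (L * C t₀) *ᵥ e = m * (e ⬝ᵥ L *ᵥ e) := by
      rw [← Matrix.mulVec_mulVec, he1, Matrix.mulVec_smul, dotProduct_smul, smul_eq_mul]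
    have hterm2 : e ⬝ᵥ (C t₀ * Lᵀ) *ᵥ e = m * (e ⬝ᵥ L *ᵥ e) := by
      rw [← Matrix.mulVec_mulVec, hCe, hLT]
    have hSe : e ⬝ᵥ S *ᵥ e = e ⬝ᵥ L *ᵥ e := by
      rw [hS, Matrix.smul_mulVec, dotProduct_smul, Matrix.add_mulVec,
        dotProduct_add, hLT, smul_eq_mul]
      ring
    rw [hD, Matrix.add_mulVec, dotProduct_add, hterm1, hterm2, hSe]
    ring
  -- q t₀ on eigenvectors
  have hqES : ∀ e ∈ ES, q t₀ e = m := by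
    intro e ⟨he1, he2⟩
    rw [hq]
    simp only
    rw [he1, dotProduct_smul, smul_eq_mul]
    have : e ⬝ᵥ e = ∑ i, e i ^ 2 := by
      simp [dotProduct, sq]
    rw [this, he2, mul_one]
  -- remainder and its control
  set R : ℝ → Matrix (Fin n) (Fin n) ℝ := fun h => C (t₀ + h) - C t₀ - h • D with hR
  set δ : ℝ → ℝ := fun h => ∑ i, ∑ j, |R h i j| with hδdef
  have hδ : Tendsto (fun h => δ h / h) (nhdsWithin 0 (Set.Ioi 0)) (nhds 0) := by
    have hent : ∀ i j, Tendsto (fun h => R h i j / h) (nhds 0) (nhds 0) := by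
      intro i j
      have hd := (hasDerivAt_iff_isLittleO).1 (hCd i j)
      have hcomp : Tendsto (fun h : ℝ => t₀ + h) (nhds 0) (nhds t₀) := by
        simpa using Continuous.tendsto (f := fun h : ℝ => t₀ + h) (continuous_const.add continuous_id) (0:ℝ)
      have hlo := hd.comp_tendsto hcomp
      simp only [Function.comp_def, add_sub_cancel_left, smul_eq_mul] at hlo
      refine Tendsto.congr (fun h => ?_) hlo.tendsto_div_nhds_zero
      congr 1
    have heq : (fun h => δ h / h) =ᶠ[nhdsWithin 0 (Set.Ioi 0)]
        fun h => ∑ i, ∑ j, |R h i j / h| := by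
      filter_upwards [self_mem_nhdsWithin] with h hh
      rw [hδdef]
      simp only
      rw [Finset.sum_div]
      refine Finset.sum_congr rfl fun i _ => ?_
      rw [Finset.sum_div]
      refine Finset.sum_congr rfl fun j _ => ?_
      rw [abs_div, abs_of_pos (show (0:ℝ) < h from hh)]
    rw [tendsto_congr' heq]
    have h2 : Tendsto (fun h => ∑ i, ∑ j, |R h i j / h|) (nhds 0) (nhds 0) := by
      have := tendsto_finset_sum (Finset.univ (α := Fin n))
        (fun i _ => tendsto_finset_sum (Finset.univ (α := Fin n))
          (fun j _ => (hent i j).abs))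
      simpa using this
    exact h2.mono_left nhdsWithin_le_nhds
  have hδ0 : Tendsto δ (nhdsWithin 0 (Set.Ioi 0)) (nhds 0) := by
    have : δ =ᶠ[nhdsWithin 0 (Set.Ioi 0)] fun h => (δ h / h) * h := by
      filter_upwards [self_mem_nhdsWithin] with h hh
      rw [div_mul_cancel₀]
      exact ne_of_gt hh
    rw [tendsto_congr' this]
    simpa using hδ.mul (tendsto_id.mono_left nhdsWithin_le_nhds)
  set B : ℝ := ∑ i, ∑ j, |D i j| with hB
  have hB0 : 0 ≤ B := Finset.sum_nonneg fun i _ => Finset.sum_nonneg fun j _ => abs_nonneg _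
  have hkey : ∀ h : ℝ, ∀ v ∈ Sph, |q (t₀ + h) v - q t₀ v - h * (v ⬝ᵥ D *ᵥ v)| ≤ δ h := by
    intro h v hv
    have hRv : q (t₀ + h) v - q t₀ v - h * (v ⬝ᵥ D *ᵥ v) = v ⬝ᵥ (R h) *ᵥ v := by
      rw [hR, hq]
      simp only [Matrix.sub_mulVec, dotProduct_sub, Matrix.smul_mulVec,
        dotProduct_smul, smul_eq_mul]
    rw [hRv]
    have := dot_bound (R h) v v 1 1 (by norm_num) (fun i => unit_abs_le hv i)
      (fun i => unit_abs_le hv i)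
    rw [hδdef]
    simpa using this
  have hDb : ∀ v ∈ Sph, |v ⬝ᵥ D *ᵥ v| ≤ B := by
    intro v hv
    have := dot_bound D v v 1 1 (by norm_num) (fun i => unit_abs_le hv i)
      (fun i => unit_abs_le hv i)
    simpa using this
  -- the gap lemma
  have hgap : ∀ ε > (0:ℝ), ∃ ρ > (0:ℝ), ∀ v ∈ Sph, q t₀ v < m + ρ →
      ∃ e ∈ ES, ∑ i, (v i - e i) ^ 2 < ε ^ 2 := by
    intro ε hε
    set K : Set (Fin n → ℝ) := {v | v ∈ Sph ∧ ∀ e ∈ ES, ε ^ 2 ≤ ∑ i, (v i - e i) ^ 2} with hK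
    have hKc : IsCompact K := by
      have hcl : IsClosed {v : Fin n → ℝ | ∀ e ∈ ES, ε ^ 2 ≤ ∑ i, (v i - e i) ^ 2} := by
        have hset : {v : Fin n → ℝ | ∀ e ∈ ES, ε ^ 2 ≤ ∑ i, (v i - e i) ^ 2}
            = ⋂ e ∈ ES, {v | ε ^ 2 ≤ ∑ i, (v i - e i) ^ 2} := by
          ext v; simp
        rw [hset]
        exact isClosed_biInter fun e _ =>
          isClosed_le continuous_const (by fun_prop)
      have hKeq : K = Sph ∩ {v | ∀ e ∈ ES, ε ^ 2 ≤ ∑ i, (v i - e i) ^ 2} := rfl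
      rw [hKeq]
      exact sphere_compact.inter_right hcl
    rcases Set.eq_empty_or_nonempty K with hKe | hKne
    · refine ⟨1, one_pos, fun v hv _ => ?_⟩
      by_contra hcon
      push_neg at hcon
      have : v ∈ K := ⟨hv, hcon⟩
      rw [hKe] at this
      exact this
    · obtain ⟨v₀, hv₀K, hmin₀⟩ := hKc.exists_isMinOn hKne (quad_continuous (C t₀)).continuousOn
      refine ⟨q t₀ v₀ - m, ?_, ?_⟩
      · have h1 : m ≤ q t₀ v₀ := hmlb v₀ hv₀K.1
        rcases lt_or_eq_of_le h1 with hlt | heq'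
        · linarith
        · exfalso
          have hv₀ES : v₀ ∈ ES := ⟨heig v₀ hv₀K.1 heq'.symm, hv₀K.1⟩
          have := hv₀K.2 v₀ hv₀ES
          simp only [sub_self] at this
          have h0 : ∑ _i : Fin n, ((0:ℝ)) ^ 2 = 0 := by simp
          rw [h0] at this
          nlinarith [hε]
      · intro v hvS hvq
        by_contra hcon
        push_neg at hcon
        have hvK : v ∈ K := ⟨hvS, hcon⟩
        have := hmin₀ hvK
        simp only [Set.mem_setOf_eq] at this
        have hqq : q t₀ v₀ ≤ q t₀ v := this
        linarith
  -- limit of the difference quotient of f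
  have hflim : Tendsto (fun h => (f (t₀ + h) - m) / h) (nhdsWithin 0 (Set.Ioi 0))
      (nhds (2 * m * τ)) := by
    rw [Metric.tendsto_nhds]
    intro ε hε
    have hB1 : (0:ℝ) < 2 * B + 1 := by linarith
    set ε' : ℝ := ε / (2 * (2 * B + 1)) with hε'def
    have hε' : 0 < ε' := by positivity
    obtain ⟨ρ, hρ, hgapε⟩ := hgap ε' hε'
    have hεeq : ε' * (2 * (2 * B + 1)) = ε := by
      rw [hε'def]; field_simp
    have hεbound : 2 * B * ε' ≤ ε / 2 := by nlinarith [hεeq, hB0, hε'.le]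
    have hEv2 : ∀ᶠ h in nhdsWithin 0 (Set.Ioi 0), δ h / h < ε / 4 :=
      hδ.eventually (gt_mem_nhds (by positivity))
    have hEv3 : ∀ᶠ h in nhdsWithin 0 (Set.Ioi 0),
        h * (|2 * m * τ| + B) + 2 * δ h < ρ := by
      have ht : Tendsto (fun h => h * (|2 * m * τ| + B) + 2 * δ h)
          (nhdsWithin 0 (Set.Ioi 0)) (nhds 0) := by
        have h1 : Tendsto (fun h : ℝ => h * (|2 * m * τ| + B))
            (nhdsWithin 0 (Set.Ioi 0)) (nhds 0) := by
          have hid : Tendsto (fun h : ℝ => h) (nhdsWithin 0 (Set.Ioi 0)) (nhds 0) :=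
            tendsto_id.mono_left nhdsWithin_le_nhds
          have := hid.mul_const (|2 * m * τ| + B)
          simpa using this
        have h2 := hδ0.const_mul (2:ℝ)
        simpa using h1.add h2
      exact ht.eventually (gt_mem_nhds hρ)
    filter_upwards [self_mem_nhdsWithin, hEv2, hEv3] with h hh h2 h3
    have hpos : (0:ℝ) < h := hh
    obtain ⟨⟨v, hvS, hvq⟩, hlbt⟩ := hmin (t₀ + h)
    have hkv := abs_le.1 (hkey h v hvS)
    have hupper : f (t₀ + h) ≤ m + h * (2 * m * τ) + δ h := by
      have h1 := hlbt es hesES.2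
      have hke := abs_le.1 (hkey h es hesES.2)
      have hqes : q t₀ es = m := hqES es hesES
      have hDes : es ⬝ᵥ D *ᵥ es = 2 * m * τ := by rw [hDq es hesES, hesτ]
      rw [hqes, hDes] at hke
      linarith [hke.2, hke.1]
    have hDvb := abs_le.1 (hDb v hvS)
    have hqt₀v : q t₀ v < m + ρ := by
      have e1 : q t₀ v ≤ f (t₀ + h) - h * (v ⬝ᵥ D *ᵥ v) + δ h := by
        rw [← hvq]; linarith [hkv.1, hkv.2]
      have e2 : -(h * (v ⬝ᵥ D *ᵥ v)) ≤ h * B := by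
        have hx : -(v ⬝ᵥ D *ᵥ v) ≤ B := neg_le.mpr (by linarith [hDvb.1])
        calc -(h * (v ⬝ᵥ D *ᵥ v)) = h * (-(v ⬝ᵥ D *ᵥ v)) := by ring
          _ ≤ h * B := mul_le_mul_of_nonneg_left hx hpos.le
      have e3 : h * (2 * m * τ) ≤ h * |2 * m * τ| :=
        mul_le_mul_of_nonneg_left (le_abs_self _) hpos.le
      linarith [e1, e2, e3, hupper, h3]
    obtain ⟨e, heES, hclose⟩ := hgapε v hvS hqt₀v
    have heS : e ∈ Sph := heES.2
    have hwb : ∀ i, |(v - e) i| ≤ ε' := by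
      intro i
      have h1 : (v i - e i) ^ 2 ≤ ∑ i, (v i - e i) ^ 2 :=
        Finset.single_le_sum (f := fun j => (v j - e j) ^ 2)
          (fun j _ => sq_nonneg _) (Finset.mem_univ i)
      have h2' : (v i - e i) ^ 2 < ε' ^ 2 := lt_of_le_of_lt h1 hclose
      have h3' : |(v - e) i| = |v i - e i| := by simp [Pi.sub_apply]
      rw [h3']
      nlinarith [sq_abs (v i - e i), abs_nonneg (v i - e i), hε']
    have hcross : |v ⬝ᵥ D *ᵥ v - e ⬝ᵥ D *ᵥ e| ≤ 2 * B * ε' := by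
      have hid : v ⬝ᵥ D *ᵥ v - e ⬝ᵥ D *ᵥ e = (v - e) ⬝ᵥ D *ᵥ v + e ⬝ᵥ D *ᵥ (v - e) := by
        rw [sub_dotProduct, Matrix.mulVec_sub, dotProduct_sub]; ring
      have hb1 := dot_bound D (v - e) v ε' 1 hε'.le hwb (fun i => unit_abs_le hvS i)
      have hb2 := dot_bound D e (v - e) 1 ε' (by norm_num) (fun i => unit_abs_le heS i) hwb
      rw [hid]
      calc |(v - e) ⬝ᵥ D *ᵥ v + e ⬝ᵥ D *ᵥ (v - e)|
          ≤ |(v - e) ⬝ᵥ D *ᵥ v| + |e ⬝ᵥ D *ᵥ (v - e)| := abs_add_le _ _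
        _ ≤ (∑ i, ∑ j, |D i j|) * (ε' * 1) + (∑ i, ∑ j, |D i j|) * (1 * ε') :=
            add_le_add hb1 hb2
        _ = 2 * B * ε' := by rw [← hB]; ring
    have heDe : 2 * m * τ ≤ e ⬝ᵥ D *ᵥ e := by
      rw [hDq e heES]
      have := hτlb e heES
      have h2m : (0:ℝ) ≤ 2 * m := by linarith [hmpos]
      calc 2 * m * τ ≤ 2 * m * (e ⬝ᵥ S *ᵥ e) := mul_le_mul_of_nonneg_left this h2m
        _ = 2 * m * (e ⬝ᵥ S *ᵥ e) := rfl
    have hlower : m + h * (2 * m * τ - 2 * B * ε') - δ h ≤ f (t₀ + h) := by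
      have e1 : q t₀ v + h * (v ⬝ᵥ D *ᵥ v) - δ h ≤ f (t₀ + h) := by
        rw [← hvq]; linarith [hkv.1]
      have e2 : m ≤ q t₀ v := hmlb v hvS
      have e3 : 2 * m * τ - 2 * B * ε' ≤ v ⬝ᵥ D *ᵥ v := by
        have := abs_le.1 hcross
        linarith [heDe, this.1]
      have e4 : h * (2 * m * τ - 2 * B * ε') ≤ h * (v ⬝ᵥ D *ᵥ v) :=
        mul_le_mul_of_nonneg_left e3 hpos.le
      linarith [e1, e2, e4]
    rw [Real.dist_eq]
    have hδh : 0 ≤ δ h / h := by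
      apply div_nonneg _ hpos.le
      rw [hδdef]
      exact Finset.sum_nonneg fun i _ => Finset.sum_nonneg fun j _ => abs_nonneg _
    have hub : (f (t₀ + h) - m) / h - 2 * m * τ ≤ δ h / h := by
      rw [div_sub' (ne_of_gt hpos), div_le_div_iff₀ hpos hpos]
      have : (f (t₀ + h) - m) * h ≤ (m + h * (2 * m * τ) + δ h - m) * h := by
        apply mul_le_mul_of_nonneg_right _ hpos.le
        linarith [hupper]
      calc (f (t₀ + h) - m - h * (2 * m * τ)) * h
          = (f (t₀ + h) - m) * h - (h * (2 * m * τ)) * h := by ring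
        _ ≤ (m + h * (2 * m * τ) + δ h - m) * h - (h * (2 * m * τ)) * h := by linarith
        _ = δ h * h := by ring
    have hlb2 : -(2 * B * ε' + δ h / h) ≤ (f (t₀ + h) - m) / h - 2 * m * τ := by
      rw [div_sub' (ne_of_gt hpos), le_div_iff₀ hpos]
      have hkey2 : h * (2 * m * τ - 2 * B * ε') - δ h ≤ f (t₀ + h) - m := by
        linarith [hlower]
      have hcc : δ h / h * h = δ h := div_mul_cancel₀ _ (ne_of_gt hpos)
      calc -(2 * B * ε' + δ h / h) * h
          = h * (2 * m * τ - 2 * B * ε') - δ h / h * h - h * (2 * m * τ) := by ring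
        _ = h * (2 * m * τ - 2 * B * ε') - δ h - h * (2 * m * τ) := by rw [hcc]
        _ ≤ f (t₀ + h) - m - h * (2 * m * τ) := by linarith [hkey2]
    have habs : |(f (t₀ + h) - m) / h - 2 * m * τ| ≤ 2 * B * ε' + δ h / h := by
      rw [abs_le]
      constructor
      · exact hlb2
      · have : (0:ℝ) ≤ 2 * B * ε' := by positivity
        linarith
    linarith [habs, hεbound, h2]
  -- final assembly
  have hf0 : Tendsto (fun h => f (t₀ + h)) (nhdsWithin 0 (Set.Ioi 0)) (nhds m) := by
    have hid : Tendsto (fun h : ℝ => h) (nhdsWithin 0 (Set.Ioi 0)) (nhds 0) :=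
      tendsto_id.mono_left nhdsWithin_le_nhds
    have h1 : Tendsto (fun h => (f (t₀ + h) - m) / h * h)
        (nhdsWithin 0 (Set.Ioi 0)) (nhds 0) := by
      simpa using hflim.mul hid
    have h2 : (fun h => f (t₀ + h)) =ᶠ[nhdsWithin 0 (Set.Ioi 0)]
        fun h => (f (t₀ + h) - m) / h * h + m := by
      filter_upwards [self_mem_nhdsWithin] with h hh
      rw [div_mul_cancel₀ _ (ne_of_gt hh)]
      ring
    rw [tendsto_congr' h2]
    simpa using h1.add (tendsto_const_nhds (x := m))
  have hsqt : Tendsto (fun h => Real.sqrt (f (t₀ + h)) + Real.sqrt m)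
      (nhdsWithin 0 (Set.Ioi 0)) (nhds (2 * Real.sqrt m)) := by
    have h1 : Tendsto (fun h => Real.sqrt (f (t₀ + h))) (nhdsWithin 0 (Set.Ioi 0))
        (nhds (Real.sqrt m)) := (Real.continuous_sqrt.tendsto m).comp hf0
    have := h1.add (tendsto_const_nhds (x := Real.sqrt m))
    simpa [two_mul] using this
  have hsm : 0 < Real.sqrt m := Real.sqrt_pos.2 hmpos
  have hquot : Tendsto
      (fun h => ((f (t₀ + h) - m) / h) / (Real.sqrt (f (t₀ + h)) + Real.sqrt m))
      (nhdsWithin 0 (Set.Ioi 0)) (nhds (2 * m * τ / (2 * Real.sqrt m))) :=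
    hflim.div hsqt (by positivity)
  have heq2 : (fun h : ℝ => (ν (t₀ + h) - ν t₀) / h) =ᶠ[nhdsWithin 0 (Set.Ioi 0)]
      fun h => ((f (t₀ + h) - m) / h) / (Real.sqrt (f (t₀ + h)) + Real.sqrt m) := by
    filter_upwards [self_mem_nhdsWithin] with h hh
    rw [hνf (t₀ + h), hνf t₀]
    have hfa : 0 ≤ f (t₀ + h) := hfnonneg _
    have hss : 0 < Real.sqrt (f (t₀ + h)) + Real.sqrt m := by
      have := Real.sqrt_nonneg (f (t₀ + h))
      linarith
    have hmul : (Real.sqrt (f (t₀ + h)) - Real.sqrt (f t₀))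
        * (Real.sqrt (f (t₀ + h)) + Real.sqrt m) = f (t₀ + h) - m := by
      have e1 : Real.sqrt (f (t₀ + h)) ^ 2 = f (t₀ + h) := Real.sq_sqrt hfa
      have e2 : Real.sqrt m ^ 2 = m := Real.sq_sqrt hmpos.le
      have e3 : Real.sqrt (f t₀) = Real.sqrt m := rfl
      rw [e3]
      linear_combination e1 - e2
    rw [eq_div_iff (ne_of_gt hss), div_mul_eq_mul_div, hmul]
  rw [tendsto_congr' heq2]
  have hlim_eq : 2 * m * τ / (2 * Real.sqrt m) = ν t₀ * τ := by
    rw [hνf t₀]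
    have e3 : Real.sqrt (f t₀) = Real.sqrt m := rfl
    rw [e3, div_eq_iff (by positivity)]
    have e2 : Real.sqrt m ^ 2 = m := Real.sq_sqrt hmpos.le
    linear_combination (-2) * τ * e2
  rw [← hlim_eq]
  exact hquot
end
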